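/- Fix n ≥ 1, ν > 0 and σ ∈ (0,1/2). There exist constants C > 0 and c > 0 such that for every t ≥ 0 and every ξ ∈ ℝⁿ with 0 < |ξ| ≤ ρ: |𝒥₁(t,ξ) − e^{−(t/ν)|ξ|^{2(1−σ)}}| ≤ C e^{−c(1+t)|ξ|^{2(1−σ)}} ( t|ξ|^{2(2−3σ)} + |ξ|^{2(1−2σ)} ) and |𝒥₂(t,ξ) − e^{−(t/ν)|ξ|^{2(1−σ)}}/(ν|ξ|^{2σ})| ≤ C e^{−c(1+t)|ξ|^{2(1−σ)}} ( t|ξ|^{2(2−3σ)−2σ} + |ξ|^{2(1−2σ)−2σ} ). -/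

import Mathlib

set_option maxHeartbeats 4000000 in
/-- Low-frequency approximation of the multipliers `𝒥₁` and `𝒥₂` by the parabolic kernels
`e^{-(t/ν)|ξ|^{2(1-σ)}}` and `e^{-(t/ν)|ξ|^{2(1-σ)}}/(ν|ξ|^{2σ})` for `σ ∈ (0,1/2)`. -/
theorem stmt6 (n : ℕ) (hn : 1 ≤ n) (ν σ : ℝ) (hν : 0 < ν)
    (hσ : σ ∈ Set.Ioo (0:ℝ) (1/2)) (ρ : ℝ)
    (hρ : ρ = (1/2) * (ν/2) ^ ((1:ℝ)/(1 - 2*σ)))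
    (lp lm : EuclideanSpace ℝ (Fin n) → ℝ)
    (hlp : ∀ ξ, lp ξ = -(ν/2) * ‖ξ‖ ^ (2*σ) + Real.sqrt (ν^2/4 * ‖ξ‖ ^ (4*σ) - ‖ξ‖^2))
    (hlm : ∀ ξ, lm ξ = -(ν/2) * ‖ξ‖ ^ (2*σ) - Real.sqrt (ν^2/4 * ‖ξ‖ ^ (4*σ) - ‖ξ‖^2)) :
    ∃ C > 0, ∃ c > 0, ∀ t : ℝ, 0 ≤ t →
      ∀ ξ : EuclideanSpace ℝ (Fin n), 0 < ‖ξ‖ → ‖ξ‖ ≤ ρ →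
        |(-(lm ξ) * Real.exp (lp ξ * t) / (lp ξ - lm ξ)) - Real.exp (-(t/ν) * ‖ξ‖ ^ (2*(1 - σ)))|
            ≤ C * Real.exp (-c * (1 + t) * ‖ξ‖ ^ (2*(1 - σ))) *
              (t * ‖ξ‖ ^ (2*(2 - 3*σ)) + ‖ξ‖ ^ (2*(1 - 2*σ))) ∧
        |(Real.exp (lp ξ * t) / (lp ξ - lm ξ)) -
            Real.exp (-(t/ν) * ‖ξ‖ ^ (2*(1 - σ))) / (ν * ‖ξ‖ ^ (2*σ))|
            ≤ C * Real.exp (-c * (1 + t) * ‖ξ‖ ^ (2*(1 - σ))) *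
              (t * ‖ξ‖ ^ (2*(2 - 3*σ) - 2*σ) + ‖ξ‖ ^ (2*(1 - 2*σ) - 2*σ)) := by
  obtain ⟨hσ0, hσh⟩ := hσ
  have hσ1 : 2*σ < 1 := by linarith
  have hν2 : (0:ℝ) < ν/2 := by linarith
  have hρ0 : 0 < ρ := by
    rw [hρ]
    have : (0:ℝ) < (ν/2) ^ ((1:ℝ)/(1-2*σ)) := Real.rpow_pos_of_pos hν2 _
    linarith
  set x₀ : ℝ := (1/2:ℝ) ^ ((2:ℝ) - 4*σ) with hx₀
  have hx₀pos : 0 < x₀ := Real.rpow_pos_of_pos (by norm_num) _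
  have hx₀lt : x₀ < 1 := Real.rpow_lt_one (by norm_num) (by norm_num) (by linarith)
  set s₀ : ℝ := Real.sqrt (1 - x₀) with hs₀def
  have hs₀ : 0 < s₀ := Real.sqrt_pos.mpr (by linarith)
  set E : ℝ := Real.exp (ρ ^ ((2:ℝ)*(1-σ)) / ν) with hE
  have hEpos : 0 < E := Real.exp_pos _
  set S : ℝ := 2/(ν^2*s₀) + 4/ν^3 + 4/(ν^3*s₀) + 4/ν^4 with hS
  have hSpos : 0 < S := by positivity
  clear_value x₀ s₀ E S
  refine ⟨E * S, by positivity, 1/ν, by positivity, ?_⟩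
  intro t ht ξ hr hrρ
  set r : ℝ := ‖ξ‖ with hrdef
  clear_value r
  set P : ℝ := r ^ ((2:ℝ)*σ) with hPdef
  have hP : 0 < P := Real.rpow_pos_of_pos hr _
  set Q : ℝ := r ^ 2 with hQdef
  have hQ : 0 < Q := by positivity
  clear_value P Q
  -- rpow conversions
  have hr2 : r ^ ((2:ℝ)) = Q := by
    rw [hQdef, ← Real.rpow_natCast r 2]; norm_num
  have hPk : ∀ k : ℕ, P ^ k = r ^ ((2:ℝ)*σ*k) := by
    intro k
    rw [hPdef, ← Real.rpow_natCast (r ^ ((2:ℝ)*σ)) k, ← Real.rpow_mul hr.le]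
  have hQk : ∀ k : ℕ, Q ^ k = r ^ ((2:ℝ)*k) := by
    intro k
    rw [hQdef, ← pow_mul, ← Real.rpow_natCast r (2*k)]
    push_cast; ring_nf
  have h4σ : r ^ ((4:ℝ)*σ) = P^2 := by
    rw [hPk 2]; congr 1; push_cast; ring
  have hT0 : r ^ ((2:ℝ)*(1-σ)) = Q / P := by
    rw [eq_div_iff hP.ne', hPdef, ← Real.rpow_add hr, ← hr2]
    congr 1; ring
  have hT1a : r ^ ((2:ℝ)*(2-3*σ)) = Q^2 / P^3 := by
    rw [eq_div_iff (by positivity : (P:ℝ)^3 ≠ 0), hPk 3, ← Real.rpow_add hr, hQk 2]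
    congr 1; push_cast; ring
  have hT1b : r ^ ((2:ℝ)*(1-2*σ)) = Q / P^2 := by
    rw [eq_div_iff (by positivity : (P:ℝ)^2 ≠ 0), hPk 2, ← Real.rpow_add hr, ← hr2]
    congr 1; push_cast; ring
  have hT2a : r ^ ((2:ℝ)*(2-3*σ) - 2*σ) = Q^2 / P^4 := by
    rw [eq_div_iff (by positivity : (P:ℝ)^4 ≠ 0), hPk 4, ← Real.rpow_add hr, hQk 2]
    congr 1; push_cast; ring
  have hT2b : r ^ ((2:ℝ)*(1-2*σ) - 2*σ) = Q / P^3 := by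
    rw [eq_div_iff (by positivity : (P:ℝ)^3 ≠ 0), hPk 3, ← Real.rpow_add hr, ← hr2]
    congr 1; push_cast; ring
  -- a and D
  set a : ℝ := ν/2 * P with hadef
  have ha : 0 < a := by positivity
  clear_value a
  have haa : ν^2/4 * r ^ ((4:ℝ)*σ) = a^2 := by rw [h4σ, hadef]; ring
  -- key smallness
  have hexp0 : (0:ℝ) < 2 - 4*σ := by linarith
  have hrub : r ^ ((2:ℝ)-4*σ) ≤ ρ ^ ((2:ℝ)-4*σ) :=
    Real.rpow_le_rpow hr.le hrρ hexp0.le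
  have hne : (1:ℝ) - 2*σ ≠ 0 := by linarith
  have hρval : ρ ^ ((2:ℝ)-4*σ) = x₀ * (ν/2)^2 := by
    have h2 : ((ν/2) ^ ((1:ℝ)/(1-2*σ))) ^ ((2:ℝ)-4*σ) = (ν/2)^2 := by
      rw [← Real.rpow_natCast (ν/2) 2, ← Real.rpow_mul hν2.le]
      congr 1; push_cast; field_simp; ring
    rw [hρ, Real.mul_rpow (by norm_num) (Real.rpow_pos_of_pos hν2 _).le, h2, hx₀]
  have hQx : Q ≤ x₀ * a^2 := by
    have h1 : Q = r ^ ((2:ℝ)-4*σ) * r ^ ((4:ℝ)*σ) := by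
      rw [← Real.rpow_add hr, ← hr2]; congr 1; ring
    have h2 : r ^ ((2:ℝ)-4*σ) * r ^ ((4:ℝ)*σ) ≤ (x₀ * (ν/2)^2) * r ^ ((4:ℝ)*σ) := by
      apply mul_le_mul_of_nonneg_right _ (Real.rpow_pos_of_pos hr _).le
      rw [← hρval]; exact hrub
    calc Q ≤ (x₀ * (ν/2)^2) * r ^ ((4:ℝ)*σ) := by rw [h1]; exact h2
    _ = x₀ * a^2 := by rw [h4σ, hadef]; ring
  have hQa : Q < a^2 := lt_of_le_of_lt hQx (by nlinarith)
  set D : ℝ := Real.sqrt (ν^2/4 * r ^ ((4:ℝ)*σ) - r^2) with hDdef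
  clear_value D
  have hargeq : ν^2/4 * r ^ ((4:ℝ)*σ) - r^2 = a^2 - Q := by rw [haa, hQdef]
  have hD2 : D^2 = a^2 - Q := by
    rw [hDdef, hargeq, Real.sq_sqrt (by linarith)]
  have hDle : D ≤ a := by
    rw [hDdef, hargeq]
    calc Real.sqrt (a^2 - Q) ≤ Real.sqrt (a^2) := Real.sqrt_le_sqrt (by linarith)
    _ = a := Real.sqrt_sq ha.le
  have hDge : s₀ * a ≤ D := by
    have h1 : Real.sqrt ((1-x₀) * a^2) ≤ Real.sqrt (a^2 - Q) :=
      Real.sqrt_le_sqrt (by linarith [hQx])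
    have h2 : Real.sqrt ((1-x₀) * a^2) = s₀ * a := by
      rw [Real.sqrt_mul (by linarith : (0:ℝ) ≤ 1 - x₀), Real.sqrt_sq ha.le, hs₀def]
    rw [hDdef, hargeq]
    exact le_trans (le_of_eq h2.symm) h1
  have hD0 : 0 < D := lt_of_lt_of_le (mul_pos hs₀ ha) hDge
  have hfac : (a - D)*(a + D) = Q := by linear_combination -1 * hD2
  have hADnn : 0 ≤ a - D := by linarith
  have hADle : a - D ≤ Q/a := by
    rw [le_div_iff₀ ha]
    have h := mul_le_mul_of_nonneg_left (show a ≤ a + D by linarith) hADnn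
    linarith [hfac]
  have hADge2 : Q/(2*a) ≤ a - D := by
    rw [div_le_iff₀ (by positivity : (0:ℝ) < 2*a)]
    have h := mul_le_mul_of_nonneg_left (show a + D ≤ 2*a by linarith) hADnn
    linarith [hfac]
  have hgap : (a - D) - Q/(2*a) ≤ Q^2/(2*a^3) := by
    have key : (a - D) - Q/(2*a) = (a-D)^2/(2*a) := by
      rw [← hfac]; field_simp; ring
    rw [key]
    calc (a-D)^2/(2*a) ≤ (Q/a)^2/(2*a) := by gcongr
    _ = Q^2/(2*a^3) := by field_simp
  -- roots
  have hlpξ : lp ξ = -a + D := by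
    rw [hlp ξ, ← hrdef, ← hDdef, hadef, hPdef]; ring
  have hlmξ : lm ξ = -a - D := by
    rw [hlm ξ, ← hrdef, ← hDdef, hadef, hPdef]; ring
  have hlpm : lp ξ - lm ξ = 2*D := by rw [hlpξ, hlmξ]; ring
  have hlmneg : -(lm ξ) = a + D := by rw [hlmξ]; ring
  have hμm : Q/(2*a) = r ^ ((2:ℝ)*(1-σ))/ν := by
    rw [hT0, hadef]; field_simp; try ring; try tauto
  have hker : -(t/ν) * r ^ ((2:ℝ)*(1-σ)) = -(Q/(2*a))*t := by
    rw [hT0, hadef]; field_simp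
  -- exponentials
  set X : ℝ := Real.exp (lp ξ * t) with hX
  set Y : ℝ := Real.exp (-(Q/(2*a))*t) with hY
  have hX0 : 0 < X := Real.exp_pos _
  have hY0 : 0 < Y := Real.exp_pos _
  have hXY : X ≤ Y := by
    rw [hX, hY]
    apply Real.exp_le_exp.mpr
    rw [hlpξ]
    have h : -a + D ≤ -(Q/(2*a)) := by linarith [hADge2]
    exact mul_le_mul_of_nonneg_right h ht
  have hExpDiff : Y - X ≤ t * (Q^2/(2*a^3)) * Y := by
    have hy0 : 0 ≤ ((a - D) - Q/(2*a)) * t := mul_nonneg (by linarith [hADge2]) ht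
    have h1 : 1 - Real.exp (-(((a - D) - Q/(2*a)) * t)) ≤ ((a - D) - Q/(2*a)) * t := by
      have := Real.add_one_le_exp (-(((a - D) - Q/(2*a)) * t))
      linarith
    have h2 : X = Y * Real.exp (-(((a - D) - Q/(2*a)) * t)) := by
      rw [hX, hY, ← Real.exp_add, hlpξ]; congr 1; ring
    have h3 : ((a - D) - Q/(2*a)) * t ≤ Q^2/(2*a^3) * t := mul_le_mul_of_nonneg_right hgap ht
    calc Y - X = Y * (1 - Real.exp (-(((a - D) - Q/(2*a)) * t))) := by rw [h2]; ring
    _ ≤ Y * (((a - D) - Q/(2*a)) * t) := mul_le_mul_of_nonneg_left h1 hY0.le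
    _ ≤ Y * (Q^2/(2*a^3) * t) := mul_le_mul_of_nonneg_left h3 hY0.le
    _ = t * (Q^2/(2*a^3)) * Y := by ring
  set Z : ℝ := Real.exp (-(1/ν) * (1+t) * r ^ ((2:ℝ)*(1-σ))) with hZ
  have hZ0 : 0 < Z := Real.exp_pos _
  have hYZ : Y ≤ E * Z := by
    rw [hY, hE, hZ, ← Real.exp_add]
    apply Real.exp_le_exp.mpr
    have h1 : r ^ ((2:ℝ)*(1-σ)) ≤ ρ ^ ((2:ℝ)*(1-σ)) :=
      Real.rpow_le_rpow hr.le hrρ (by linarith)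
    have h2 : ρ ^ ((2:ℝ)*(1-σ)) / ν + (-(1/ν) * (1+t) * r ^ ((2:ℝ)*(1-σ))) - (-(Q/(2*a))*t)
        = (ρ ^ ((2:ℝ)*(1-σ)) - r ^ ((2:ℝ)*(1-σ))) / ν := by
      rw [hμm]; field_simp; ring
    have h3 : 0 ≤ (ρ ^ ((2:ℝ)*(1-σ)) - r ^ ((2:ℝ)*(1-σ))) / ν :=
      div_nonneg (by linarith) hν.le
    linarith
  -- coefficient comparisons
  have hc1 : 2/(ν^2*s₀) ≤ S := by
    rw [hS]
    have h1 : (0:ℝ) < 4/ν^3 := by positivity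
    have h2 : (0:ℝ) < 4/(ν^3*s₀) := by positivity
    have h3 : (0:ℝ) < 4/ν^4 := by positivity
    linarith
  have hc2 : 4/ν^3 ≤ S := by
    rw [hS]
    have h1 : (0:ℝ) < 2/(ν^2*s₀) := by positivity
    have h2 : (0:ℝ) < 4/(ν^3*s₀) := by positivity
    have h3 : (0:ℝ) < 4/ν^4 := by positivity
    linarith
  have hc3 : 4/(ν^3*s₀) ≤ S := by
    rw [hS]
    have h1 : (0:ℝ) < 2/(ν^2*s₀) := by positivity
    have h2 : (0:ℝ) < 4/ν^3 := by positivity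
    have h3 : (0:ℝ) < 4/ν^4 := by positivity
    linarith
  have hc4 : 4/ν^4 ≤ S := by
    rw [hS]
    have h1 : (0:ℝ) < 2/(ν^2*s₀) := by positivity
    have h2 : (0:ℝ) < 4/ν^3 := by positivity
    have h3 : (0:ℝ) < 4/(ν^3*s₀) := by positivity
    linarith
  constructor
  · -- first estimate
    rw [hker, ← hY, hlmneg, hlpm, hT1a, hT1b]
    have hamp1 : X ≤ (a+D)/(2*D) * X := by
      apply le_mul_of_one_le_left hX0.le
      rw [le_div_iff₀ (by positivity : (0:ℝ) < 2*D)]; linarith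
    have hampb : (a+D)/(2*D) - 1 ≤ Q/(2*s₀*a^2) := by
      have e1 : (a+D)/(2*D) - 1 = (a-D)/(2*D) := by field_simp; ring
      rw [e1]
      have e2 : (a-D)/(2*D) ≤ (Q/a)/(2*(s₀*a)) := by
        apply div_le_div₀ (by positivity) hADle (by positivity) (by linarith [hDge])
      have e3 : (Q/a)/(2*(s₀*a)) = Q/(2*s₀*a^2) := by field_simp; try ring; try tauto
      linarith
    have habs : |(a+D) * X / (2*D) - Y| ≤ ((a+D)/(2*D) - 1) * X + (Y - X) := by
      have e0 : (a+D) * X / (2*D) = (a+D)/(2*D) * X := by ring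
      rw [e0, abs_le]
      constructor
      · linarith
      · linarith
    have hstep : ((a+D)/(2*D) - 1) * X + (Y - X) ≤ Q/(2*s₀*a^2) * Y + t * (Q^2/(2*a^3)) * Y := by
      have b1 : ((a+D)/(2*D) - 1) * X ≤ Q/(2*s₀*a^2) * Y :=
        mul_le_mul hampb hXY hX0.le (by positivity)
      linarith [hExpDiff]
    have hcoef : Q/(2*s₀*a^2) * Y + t * (Q^2/(2*a^3)) * Y
        = (2/(ν^2*s₀) * (Q/P^2) + 4/ν^3 * (t * (Q^2/P^3))) * Y := by
      rw [hadef]; field_simp; ring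
    have t1 : (0:ℝ) ≤ Q/P^2 := by positivity
    have t2 : (0:ℝ) ≤ t * (Q^2/P^3) := by positivity
    have hfin : (2/(ν^2*s₀) * (Q/P^2) + 4/ν^3 * (t * (Q^2/P^3))) * Y
        ≤ E * S * Z * (t * (Q^2/P^3) + Q/P^2) := by
      calc (2/(ν^2*s₀) * (Q/P^2) + 4/ν^3 * (t * (Q^2/P^3))) * Y
          ≤ (S * (Q/P^2) + S * (t * (Q^2/P^3))) * (E * Z) := by
            apply mul_le_mul (add_le_add (mul_le_mul_of_nonneg_right hc1 t1)
              (mul_le_mul_of_nonneg_right hc2 t2)) hYZ hY0.le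
            positivity
      _ = E * S * Z * (t * (Q^2/P^3) + Q/P^2) := by ring
    calc |(a+D) * X / (2*D) - Y| ≤ ((a+D)/(2*D) - 1) * X + (Y - X) := habs
    _ ≤ Q/(2*s₀*a^2) * Y + t * (Q^2/(2*a^3)) * Y := hstep
    _ = (2/(ν^2*s₀) * (Q/P^2) + 4/ν^3 * (t * (Q^2/P^3))) * Y := hcoef
    _ ≤ E * S * Z * (t * (Q^2/P^3) + Q/P^2) := hfin
  · -- second estimate
    rw [hker, ← hY, hlpm, hT2a, hT2b]
    have h2a : ν * P = 2*a := by rw [hadef]; ring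
    rw [h2a]
    have hampb2 : 1/(2*D) - 1/(2*a) ≤ Q/(2*s₀*a^3) := by
      have e1 : 1/(2*D) - 1/(2*a) = (a-D)/(2*a*D) := by field_simp
      rw [e1]
      have e2 : (a-D)/(2*a*D) ≤ (Q/a)/(2*a*(s₀*a)) := by
        apply div_le_div₀ (by positivity) hADle (by positivity)
        have := mul_le_mul_of_nonneg_left hDge (by positivity : (0:ℝ) ≤ 2*a)
        linarith
      have e3 : (Q/a)/(2*a*(s₀*a)) = Q/(2*s₀*a^3) := by field_simp; try ring; try tauto
      linarith
    have hmono : X/(2*a) ≤ X/(2*D) := by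
      apply div_le_div_of_nonneg_left hX0.le (by positivity : (0:ℝ) < 2*D)
      linarith
    have hdivnn : 0 ≤ (Y - X)/(2*a) := div_nonneg (by linarith) (by positivity)
    have hsplit : (Y - X)/(2*a) = Y/(2*a) - X/(2*a) := by ring
    have habs : |X/(2*D) - Y/(2*a)| ≤ (1/(2*D) - 1/(2*a)) * X + (Y - X)/(2*a) := by
      have e0 : (1/(2*D) - 1/(2*a)) * X = X/(2*D) - X/(2*a) := by ring
      rw [abs_le, e0]
      constructor
      · linarith
      · linarith
    have b2 : (Y - X)/(2*a) ≤ (t * (Q^2/(2*a^3)) * Y)/(2*a) := by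
      gcongr
    have hstep : (1/(2*D) - 1/(2*a)) * X + (Y - X)/(2*a)
        ≤ Q/(2*s₀*a^3) * Y + (t * (Q^2/(2*a^3)) * Y)/(2*a) := by
      have b1 : (1/(2*D) - 1/(2*a)) * X ≤ Q/(2*s₀*a^3) * Y :=
        mul_le_mul hampb2 hXY hX0.le (by positivity)
      linarith
    have hcoef : Q/(2*s₀*a^3) * Y + (t * (Q^2/(2*a^3)) * Y)/(2*a)
        = (4/(ν^3*s₀) * (Q/P^3) + 4/ν^4 * (t * (Q^2/P^4))) * Y := by
      rw [hadef]; field_simp; ring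
    have t1 : (0:ℝ) ≤ Q/P^3 := by positivity
    have t2 : (0:ℝ) ≤ t * (Q^2/P^4) := by positivity
    have hfin : (4/(ν^3*s₀) * (Q/P^3) + 4/ν^4 * (t * (Q^2/P^4))) * Y
        ≤ E * S * Z * (t * (Q^2/P^4) + Q/P^3) := by
      calc (4/(ν^3*s₀) * (Q/P^3) + 4/ν^4 * (t * (Q^2/P^4))) * Y
          ≤ (S * (Q/P^3) + S * (t * (Q^2/P^4))) * (E * Z) := by
            apply mul_le_mul (add_le_add (mul_le_mul_of_nonneg_right hc3 t1)
              (mul_le_mul_of_nonneg_right hc4 t2)) hYZ hY0.le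
            positivity
      _ = E * S * Z * (t * (Q^2/P^4) + Q/P^3) := by ring
    calc |X/(2*D) - Y/(2*a)| ≤ (1/(2*D) - 1/(2*a)) * X + (Y - X)/(2*a) := habs
    _ ≤ Q/(2*s₀*a^3) * Y + (t * (Q^2/(2*a^3)) * Y)/(2*a) := hstep
    _ = (4/(ν^3*s₀) * (Q/P^3) + 4/ν^4 * (t * (Q^2/P^4))) * Y := hcoef
    _ ≤ E * S * Z * (t * (Q^2/P^4) + Q/P^3) := hfin
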